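/- Let Z be a real separated (Hausdorff) locally convex topological vector space, and C ⊆ Z a convex cone with 0 ∈ C and closure(C) ≠ Z. Then for every D ⊆ Z: ⋂_{z* ∈ C⁺, z* ≠ 0} {z ∈ Z | ⨅_{d∈D} (z*(d) : EReal) ≤ z*(z)} = closure(convexHull(D + C)), where the infimum is taken in EReal (equal to +∞ when D = ∅) and D + C = {d + c | d ∈ D, c ∈ C}. -/

import Mathlib

open Set Pointwise

/-- In a real Hausdorff locally convex space, for a convex cone `C`
with `0 ∈ C` and `cl C ≠ Z`, the closure w.r.t. the family `C⁺ \ {0}` of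
monotone continuous linear functionals is `cl co (D + C)`. -/
theorem stmt7 {Z : Type*} [AddCommGroup Z] [Module ℝ Z] [TopologicalSpace Z]
    [IsTopologicalAddGroup Z] [ContinuousSMul ℝ Z] [LocallyConvexSpace ℝ Z] [T2Space Z]
    (C : Set Z) (hCadd : ∀ c₁ ∈ C, ∀ c₂ ∈ C, c₁ + c₂ ∈ C)
    (hCsmul : ∀ t : ℝ, 0 ≤ t → ∀ c ∈ C, t • c ∈ C) (hC0 : (0 : Z) ∈ C)
    (hCne : closure C ≠ univ) (D : Set Z) :
    (⋂ ψ ∈ {ψ : Z →L[ℝ] ℝ | (∀ c ∈ C, 0 ≤ ψ c) ∧ ψ ≠ 0},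
        {z : Z | (⨅ d ∈ D, ((ψ d : ℝ) : EReal)) ≤ ((ψ z : ℝ) : EReal)})
      = closure (convexHull ℝ (D + C)) := by
  apply Subset.antisymm
  · -- hard direction
    intro z hz
    by_contra hzS
    rcases eq_empty_or_nonempty D with hD | ⟨d₀, hd₀⟩
    · -- D empty : need some ψ in the family to get contradiction
      have hCconv : Convex ℝ C := by
        intro a ha b hb s t hs ht hst
        exact hCadd _ (hCsmul s hs a ha) _ (hCsmul t ht b hb)
      obtain ⟨x, hx⟩ : ∃ x, x ∉ closure C := by
        by_contra h
        push_neg at h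
        exact hCne (eq_univ_of_forall h)
      obtain ⟨f, u, hfu, hux⟩ :=
        geometric_hahn_banach_closed_point hCconv.closure isClosed_closure hx
      have hu0 : 0 < u := by
        have := hfu 0 (subset_closure hC0)
        simpa using this
      have hfC : ∀ c ∈ C, f c ≤ 0 := by
        intro c hc
        by_contra hfc
        push_neg at hfc
        have ht : (0:ℝ) ≤ u / f c + 1 := by positivity
        have := hfu _ (subset_closure (hCsmul _ ht c hc))
        rw [map_smul, smul_eq_mul] at this
        nlinarith [div_mul_cancel₀ u (ne_of_gt hfc)]
      have hψ : (-f) ∈ {ψ : Z →L[ℝ] ℝ | (∀ c ∈ C, 0 ≤ ψ c) ∧ ψ ≠ 0} := by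
        constructor
        · intro c hc; simpa using hfC c hc
        · intro h0
          have : (-f) x = 0 := by rw [h0]; rfl
          simp only [ContinuousLinearMap.neg_apply, neg_eq_zero] at this
          linarith
      have h := mem_iInter₂.mp hz (-f) hψ
      rw [mem_setOf_eq, hD, iInf_emptyset] at h
      exact (EReal.coe_lt_top _).not_ge h
    · -- D nonempty : separate z from S
      have hSconv : Convex ℝ (closure (convexHull ℝ (D + C))) :=
        (convex_convexHull ℝ _).closure
      obtain ⟨f, u, hfu, huz⟩ :=
        geometric_hahn_banach_closed_point hSconv isClosed_closure hzS
      have hDCsub : D + C ⊆ closure (convexHull ℝ (D + C)) :=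
        subset_closure.trans' (subset_convexHull ℝ _)
      have hd₀S : d₀ ∈ closure (convexHull ℝ (D + C)) := by
        have : d₀ + 0 ∈ D + C := add_mem_add hd₀ hC0
        simpa using hDCsub this
      have hfC : ∀ c ∈ C, f c ≤ 0 := by
        intro c hc
        by_contra hfc
        push_neg at hfc
        have hfd : f d₀ < u := hfu d₀ hd₀S
        have ht : (0:ℝ) ≤ (u - f d₀) / f c + 1 := by
          have h1 : (0:ℝ) ≤ (u - f d₀) / f c := div_nonneg (by linarith) hfc.le
          linarith
        have hmem : d₀ + ((u - f d₀) / f c + 1) • c ∈ D + C :=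
          add_mem_add hd₀ (hCsmul _ ht c hc)
        have := hfu _ (hDCsub hmem)
        rw [map_add, map_smul, smul_eq_mul] at this
        nlinarith [div_mul_cancel₀ (u - f d₀) (ne_of_gt hfc)]
      have hψ : (-f) ∈ {ψ : Z →L[ℝ] ℝ | (∀ c ∈ C, 0 ≤ ψ c) ∧ ψ ≠ 0} := by
        constructor
        · intro c hc; simpa using hfC c hc
        · intro h0
          have h1 : (-f) z = 0 := by rw [h0]; rfl
          have h2 : (-f) d₀ = 0 := by rw [h0]; rfl
          simp only [ContinuousLinearMap.neg_apply, neg_eq_zero] at h1 h2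
          have := hfu d₀ hd₀S
          linarith
      have hle := mem_iInter₂.mp hz (-f) hψ
      simp only [mem_setOf_eq] at hle
      have hlow : ((-u : ℝ) : EReal) ≤ ⨅ d ∈ D, (((-f) d : ℝ) : EReal) := by
        apply le_iInf₂
        intro d hd
        have hdS : d ∈ closure (convexHull ℝ (D + C)) := by
          have : d + 0 ∈ D + C := add_mem_add hd hC0
          simpa using hDCsub this
        have := hfu d hdS
        simp only [ContinuousLinearMap.neg_apply]
        exact_mod_cast (by linarith : -u ≤ -f d)
      have hz' : (((-f) z : ℝ) : EReal) < ((-u : ℝ) : EReal) := by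
        simp only [ContinuousLinearMap.neg_apply]
        exact_mod_cast (by linarith : -f z < -u)
      exact (lt_of_le_of_lt (hlow.trans hle) hz').false
  · -- easy direction
    apply subset_iInter₂
    intro ψ hψ
    set I : EReal := ⨅ d ∈ D, ((ψ d : ℝ) : EReal) with hI
    have hclosed : IsClosed {z : Z | I ≤ ((ψ z : ℝ) : EReal)} := by
      have : {z : Z | I ≤ ((ψ z : ℝ) : EReal)} =
          ψ ⁻¹' ((Real.toEReal) ⁻¹' Ici I) := rfl
      rw [this]
      exact (isClosed_Ici.preimage continuous_coe_real_ereal).preimage ψ.continuous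
    have hconv : Convex ℝ {z : Z | I ≤ ((ψ z : ℝ) : EReal)} := by
      intro a ha b hb s t hs ht hst
      simp only [mem_setOf_eq, map_add, map_smul, smul_eq_mul] at *
      rcases le_total (ψ a) (ψ b) with hab | hab
      · refine ha.trans ?_
        have hkey : ψ a ≤ s * ψ a + t * ψ b := by
          have hs' : s = 1 - t := by linarith
          subst hs'
          nlinarith [mul_nonneg ht (sub_nonneg.mpr hab)]
        exact_mod_cast hkey
      · refine hb.trans ?_
        have hkey : ψ b ≤ s * ψ a + t * ψ b := by
          have ht' : t = 1 - s := by linarith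
          subst ht'
          nlinarith [mul_nonneg hs (sub_nonneg.mpr hab)]
        exact_mod_cast hkey
    have hsub : D + C ⊆ {z : Z | I ≤ ((ψ z : ℝ) : EReal)} := by
      rintro _ ⟨d, hd, c, hc, rfl⟩
      have h1 : I ≤ ((ψ d : ℝ) : EReal) := iInf₂_le d hd
      have h2 : (ψ d : ℝ) ≤ ψ (d + c) := by
        rw [map_add]; linarith [hψ.1 c hc]
      exact h1.trans (by exact_mod_cast h2)
    exact closure_minimal (convexHull_min hsub hconv) hclosed
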